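/- Let m be a positive integer, x_m > 0, and let ρ, ρ_m : [0,∞) → [0,∞) be nondecreasing, positive on (0,∞), with ∫₀ˣ ρ(z)⁻² dz = +∞ and ∫₀ˣ ρ_m(z)⁻² dz = +∞ for every x > 0, and ρ_m(x) ≤ ρ(x) for all x ∈ [0, x_m]. Let (U, 𝒰, μ) be a σ-finite measure space and let g : ℝ × U → ℝ be measurable such that g(·, u) is nondecreasing for every u ∈ U and ∫_U | min(g(x,u), m) − min(g(y,u), m) |² μ(du) ≤ ρ_m(|x − y|)² for all 0 ≤ x, y ≤ m. For a C² function f and w, z ∈ ℝ write D_z f(w) = f(w + z) − f(w) − z·f'(w). Then there exists a sequence (φ_k)_{k≥1} of nonnegative C² functions on ℝ with φ_k(x) increasing in k and converging to |x| for every x, 0 ≤ φ_k'(x) ≤ 1 for x ≥ 0, −1 ≤ φ_k'(x) ≤ 0 for x ≤ 0, φ_k'' ≥ 0, and such that sup_{0 ≤ x, y ≤ m} ∫_U D_{min(g(x,u),m) − min(g(y,u),m)} φ_k(x − y) μ(du) → 0 as k → ∞. -/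

import Mathlib

open Filter Set MeasureTheory Topology ENNReal

namespace YWaux
open intervalIntegral

noncomputable def Psi (ψ : ℝ → ℝ) (y : ℝ) : ℝ := ∫ t in (0:ℝ)..y, ψ |t|
noncomputable def Phi (ψ : ℝ → ℝ) (x : ℝ) : ℝ := ∫ t in (0:ℝ)..x, Psi ψ t

variable {ψ : ℝ → ℝ}

lemma contE (hc : Continuous ψ) : Continuous fun t => ψ |t| := hc.comp continuous_abs

lemma hasDerivAt_Psi (hc : Continuous ψ) (y : ℝ) : HasDerivAt (Psi ψ) (ψ |y|) y :=
  integral_hasDerivAt_right ((contE hc).intervalIntegrable _ _)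
    ((contE hc).stronglyMeasurableAtFilter _ _) (contE hc).continuousAt

lemma continuous_Psi (hc : Continuous ψ) : Continuous (Psi ψ) :=
  continuous_primitive (fun _ _ => (contE hc).intervalIntegrable _ _) _

lemma hasDerivAt_Phi (hc : Continuous ψ) (x : ℝ) : HasDerivAt (Phi ψ) (Psi ψ x) x :=
  integral_hasDerivAt_right ((continuous_Psi hc).intervalIntegrable _ _)
    ((continuous_Psi hc).stronglyMeasurableAtFilter _ _) (continuous_Psi hc).continuousAt

lemma deriv_Phi (hc : Continuous ψ) : deriv (Phi ψ) = Psi ψ :=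
  funext fun x => (hasDerivAt_Phi hc x).deriv

lemma deriv_Psi (hc : Continuous ψ) : deriv (Psi ψ) = fun t => ψ |t| :=
  funext fun x => (hasDerivAt_Psi hc x).deriv

lemma contDiff_Phi (hc : Continuous ψ) : ContDiff ℝ 2 (Phi ψ) := by
  rw [show (2 : WithTop ℕ∞) = 1 + 1 from rfl, contDiff_succ_iff_deriv]
  refine ⟨fun x => (hasDerivAt_Phi hc x).differentiableAt, by simp, ?_⟩
  rw [deriv_Phi hc, contDiff_one_iff_deriv]
  exact ⟨fun x => (hasDerivAt_Psi hc x).differentiableAt, by rw [deriv_Psi hc]; exact contE hc⟩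

lemma Psi_neg (y : ℝ) : Psi ψ (-y) = -Psi ψ y := by
  have h : (∫ t in (0:ℝ)..y, ψ |(-t)|) = ∫ t in (-y)..(-(0:ℝ)), ψ |t| :=
    integral_comp_neg fun t => ψ |t|
  simp only [abs_neg] at h
  rw [Psi, ← neg_neg (∫ t in (0:ℝ)..(-y), ψ |t|), ← intervalIntegral.integral_symm]
  rw [show -(0:ℝ) = 0 by norm_num] at h
  rw [← h]
  rfl

lemma Phi_neg (x : ℝ) : Phi ψ (-x) = Phi ψ x := by
  have h : (∫ t in (0:ℝ)..x, Psi ψ (-t)) = ∫ t in (-x)..(-(0:ℝ)), Psi ψ t :=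
    integral_comp_neg fun t => Psi ψ t
  have h2 : (∫ t in (0:ℝ)..x, -Psi ψ t) = ∫ t in (-x)..(0:ℝ), Psi ψ t := by
    simpa [Psi_neg] using h
  rw [intervalIntegral.integral_neg] at h2
  have h3 : (∫ t in (-x)..(0:ℝ), Psi ψ t) = -∫ t in (0:ℝ)..(-x), Psi ψ t :=
    intervalIntegral.integral_symm _ _
  rw [h3] at h2
  have := neg_injective h2
  rw [Phi, Phi, this]

lemma Phi_abs (x : ℝ) : Phi ψ x = Phi ψ |x| := by
  rcases le_total 0 x with hx | hx
  · rw [abs_of_nonneg hx]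
  · rw [abs_of_nonpos hx, Phi_neg]

lemma D_neg (ψ : ℝ → ℝ) (w z : ℝ) :
    Phi ψ (w + z) - Phi ψ w - z * Psi ψ w
      = Phi ψ (-w + -z) - Phi ψ (-w) - (-z) * Psi ψ (-w) := by
  rw [show -w + -z = -(w + z) by ring, Phi_neg, Phi_neg, Psi_neg]
  ring

lemma Psi_nonneg (h0 : ∀ t, 0 ≤ ψ t) {y : ℝ} (hy : 0 ≤ y) : 0 ≤ Psi ψ y :=
  intervalIntegral.integral_nonneg hy fun t _ => h0 _

lemma Phi_nonneg (hc : Continuous ψ) (h0 : ∀ t, 0 ≤ ψ t) (x : ℝ) : 0 ≤ Phi ψ x := by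
  rcases le_total 0 x with hx | hx
  · exact intervalIntegral.integral_nonneg hx fun t ht => Psi_nonneg h0 ht.1
  · rw [← Phi_neg]
    exact intervalIntegral.integral_nonneg (by linarith) fun t ht => Psi_nonneg h0 ht.1

structure Spec (ρ' : ℝ → ℝ) (ε b l r : ℝ) (ψ : ℝ → ℝ) : Prop where
  lpos : 0 < l
  lr : l ≤ r
  rb : r ≤ b / 2
  cont : Continuous ψ
  nonneg : ∀ t, 0 ≤ ψ t
  left : ∀ t, t ≤ l → ψ t = 0
  right : ∀ t, r ≤ t → ψ t = 0
  bound : ∀ t, 0 < t → ψ t ≤ ε / ρ' t ^ 2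
  total : (∫ t in (0:ℝ)..r, ψ t) = 1

variable {ρ' : ℝ → ℝ} {ε b l r : ℝ}

lemma Spec.rpos (h : Spec ρ' ε b l r ψ) : 0 < r := h.lpos.trans_le h.lr

lemma Spec.adj (h : Spec ρ' ε b l r ψ) (u v : ℝ) :
    (∫ t in (0:ℝ)..u, ψ |t|) + (∫ t in u..v, ψ |t|) = ∫ t in (0:ℝ)..v, ψ |t| :=
  integral_add_adjacent_intervals ((contE h.cont).intervalIntegrable _ _)
    ((contE h.cont).intervalIntegrable _ _)

lemma Spec.Psi_sub (h : Spec ρ' ε b l r ψ) (u v : ℝ) :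
    Psi ψ v - Psi ψ u = ∫ t in u..v, ψ |t| := by
  rw [Psi, Psi, ← h.adj u v]; ring

lemma Spec.Psi_eq_one (h : Spec ρ' ε b l r ψ) {y : ℝ} (hy : r ≤ y) : Psi ψ y = 1 := by
  have h1 : (∫ t in (0:ℝ)..r, ψ |t|) = 1 := by
    rw [← h.total]
    refine intervalIntegral.integral_congr fun t ht => ?_
    rw [uIcc_of_le h.rpos.le] at ht
    rw [abs_of_nonneg ht.1]
  have h2 : (∫ t in r..y, ψ |t|) = 0 := by
    have heq : EqOn (fun t => ψ |t|) (fun _ => (0:ℝ)) (uIcc r y) := by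
      intro t ht
      rw [uIcc_of_le hy] at ht
      exact h.right _ (le_trans ht.1 (le_abs_self t))
    rw [intervalIntegral.integral_congr heq, intervalIntegral.integral_const, smul_zero]
  rw [Psi, ← h.adj r y, h1, h2, add_zero]

lemma Spec.Psi_le_one (h : Spec ρ' ε b l r ψ) (y : ℝ) : Psi ψ y ≤ 1 := by
  rcases le_total y r with hy | hy
  · have h1 := h.Psi_sub y r
    rw [h.Psi_eq_one le_rfl] at h1
    have h2 : 0 ≤ ∫ t in y..r, ψ |t| :=
      intervalIntegral.integral_nonneg hy fun t _ => h.nonneg _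
    linarith
  · exact (h.Psi_eq_one hy).le

lemma Spec.Psi_eq_zero (h : Spec ρ' ε b l r ψ) {y : ℝ} (h0 : 0 ≤ y) (hy : y ≤ l) :
    Psi ψ y = 0 := by
  have heq : EqOn (fun t => ψ |t|) (fun _ => (0:ℝ)) (uIcc 0 y) := by
    intro t ht
    rw [uIcc_of_le h0] at ht
    have : |t| ≤ l := by rw [abs_of_nonneg ht.1]; exact ht.2.trans hy
    exact h.left _ this
  rw [Psi, intervalIntegral.integral_congr heq, intervalIntegral.integral_const, smul_zero]

lemma Spec.Phi_le (h : Spec ρ' ε b l r ψ) {X : ℝ} (hX : 0 ≤ X) : Phi ψ X ≤ X := by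
  have h1 : (∫ t in (0:ℝ)..X, Psi ψ t) ≤ ∫ t in (0:ℝ)..X, (1:ℝ) :=
    intervalIntegral.integral_mono_on hX ((continuous_Psi h.cont).intervalIntegrable _ _)
      intervalIntegrable_const fun t _ => h.Psi_le_one t
  simpa [Phi] using h1

lemma Spec.Phi_adj (h : Spec ρ' ε b l r ψ) (u v : ℝ) :
    Phi ψ v - Phi ψ u = ∫ t in u..v, Psi ψ t := by
  rw [Phi, Phi, ← integral_add_adjacent_intervals
    ((continuous_Psi h.cont).intervalIntegrable 0 u)
    ((continuous_Psi h.cont).intervalIntegrable u v)]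
  ring

lemma Spec.Phi_ge (h : Spec ρ' ε b l r ψ) {X : ℝ} (hX : 0 ≤ X) :
    X - r ≤ Phi ψ X := by
  rcases le_total X r with hXr | hXr
  · have := Phi_nonneg h.cont h.nonneg X; linarith
  · have h1 : Phi ψ X - Phi ψ r = ∫ t in r..X, Psi ψ t := h.Phi_adj r X
    have h2 : (∫ t in r..X, Psi ψ t) = X - r := by
      have heq : EqOn (Psi ψ) (fun _ => (1:ℝ)) (uIcc r X) := by
        intro t ht
        rw [uIcc_of_le hXr] at ht
        exact h.Psi_eq_one ht.1
      rw [intervalIntegral.integral_congr heq, intervalIntegral.integral_const]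
      simp
    have h3 : 0 ≤ Phi ψ r := Phi_nonneg h.cont h.nonneg r
    linarith

lemma Spec.phi_le_abs (h : Spec ρ' ε b l r ψ) (x : ℝ) : Phi ψ x ≤ |x| := by
  rw [Phi_abs]; exact h.Phi_le (abs_nonneg x)

lemma Spec.abs_sub_le (h : Spec ρ' ε b l r ψ) (x : ℝ) : |x| - r ≤ Phi ψ x := by
  rw [Phi_abs]; exact h.Phi_ge (abs_nonneg x)

lemma Spec.core_est (h : Spec ρ' ε b l r ψ) (hε : 0 ≤ ε)
    (hmono : Monotone ρ') (hpos : ∀ t, 0 < t → 0 < ρ' t)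
    {w z : ℝ} (hw : 0 < w) (hz : 0 ≤ z) :
    Phi ψ (w + z) - Phi ψ w - z * Psi ψ w ≤ z ^ 2 / 2 * (ε / ρ' w ^ 2) := by
  set B := ε / ρ' w ^ 2 with hBdef
  have hρw : 0 < ρ' w ^ 2 := pow_pos (hpos w hw) 2
  have hB : 0 ≤ B := div_nonneg hε hρw.le
  have key : ∀ t ∈ Icc w (w + z), Psi ψ t - Psi ψ w ≤ (t - w) * B := by
    intro t ht
    have htw : w ≤ t := ht.1
    have h1 : Psi ψ t - Psi ψ w = ∫ s in w..t, ψ |s| := h.Psi_sub w t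
    have h2 : (∫ s in w..t, ψ |s|) ≤ ∫ s in w..t, B := by
      refine intervalIntegral.integral_mono_on htw
        ((contE h.cont).intervalIntegrable _ _) intervalIntegrable_const ?_
      intro s hs
      have hspos : 0 < s := hw.trans_le hs.1
      rw [abs_of_nonneg hspos.le]
      refine (h.bound s hspos).trans ?_
      exact div_le_div_of_nonneg_left hε hρw
        (pow_le_pow_left₀ (hpos w hw).le (hmono hs.1) 2)
    have h3 : (∫ s in w..t, B) = (t - w) * B := by
      rw [intervalIntegral.integral_const, smul_eq_mul]
    linarith
  have hD : Phi ψ (w + z) - Phi ψ w - z * Psi ψ w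
      = ∫ t in w..(w + z), (Psi ψ t - Psi ψ w) := by
    rw [intervalIntegral.integral_sub ((continuous_Psi h.cont).intervalIntegrable _ _)
      intervalIntegrable_const, intervalIntegral.integral_const, h.Phi_adj w (w + z)]
    simp [smul_eq_mul]
  have hmono2 : (∫ t in w..(w + z), (Psi ψ t - Psi ψ w))
      ≤ ∫ t in w..(w + z), (t - w) * B := by
    refine intervalIntegral.integral_mono_on (by linarith)
      (((continuous_Psi h.cont).sub continuous_const).intervalIntegrable _ _)
      (((continuous_id.sub continuous_const).mul continuous_const).intervalIntegrable _ _) ?_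
    intro t ht
    exact key t (by simpa using ht)
  have hval : (∫ t in w..(w + z), (t - w) * B) = z ^ 2 / 2 * B := by
    rw [intervalIntegral.integral_mul_const]
    have h4 : (∫ t in w..(w + z), (t - w)) = ∫ t in (w - w)..(w + z - w), t :=
      intervalIntegral.integral_comp_sub_right (fun s => s) w
    rw [h4]
    simp only [sub_self, add_sub_cancel_left]
    rw [integral_id]
    ring
  linarith

lemma Spec.core_zero (h : Spec ρ' ε b l r ψ) {w z : ℝ} (hw : r ≤ w) (hz : 0 ≤ z) :
    Phi ψ (w + z) - Phi ψ w - z * Psi ψ w = 0 := by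
  have h1 : Phi ψ (w + z) - Phi ψ w = ∫ t in w..(w + z), Psi ψ t := h.Phi_adj _ _
  have h2 : (∫ t in w..(w + z), Psi ψ t) = z := by
    have heq : EqOn (Psi ψ) (fun _ => (1:ℝ)) (uIcc w (w + z)) := by
      intro t ht
      rw [uIcc_of_le (by linarith)] at ht
      exact h.Psi_eq_one (hw.trans ht.1)
    rw [intervalIntegral.integral_congr heq, intervalIntegral.integral_const]
    simp
  rw [h.Psi_eq_one hw] at *
  rw [h1] at *
  rw [h2]; ring

lemma Spec.Dbound (h : Spec ρ' ε b l r ψ) (hε : 0 ≤ ε) (hmono : Monotone ρ')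
    (hpos : ∀ t, 0 < t → 0 < ρ' t) (ρm : ℝ → ℝ) (x_m : ℝ) (hr : r ≤ x_m)
    (hρm_pos : ∀ t, 0 < t → 0 < ρm t) (hcomp : ∀ t, 0 < t → t ≤ x_m → ρm t ≤ ρ' t)
    {w z : ℝ} (hw : 0 < w) (hz : 0 ≤ z) :
    Phi ψ (w + z) - Phi ψ w - z * Psi ψ w ≤ z ^ 2 * (ε / (2 * ρm w ^ 2)) := by
  rcases le_total w x_m with hwx | hwx
  · refine (h.core_est hε hmono hpos hw hz).trans ?_
    have h1 : 0 < ρm w := hρm_pos w hw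
    have h2 : ρm w ≤ ρ' w := hcomp w hw hwx
    have h3 : ε / ρ' w ^ 2 ≤ ε / ρm w ^ 2 :=
      div_le_div_of_nonneg_left hε (pow_pos h1 2) (pow_le_pow_left₀ h1.le h2 2)
    calc z ^ 2 / 2 * (ε / ρ' w ^ 2) ≤ z ^ 2 / 2 * (ε / ρm w ^ 2) :=
          mul_le_mul_of_nonneg_left h3 (by positivity)
      _ = z ^ 2 * (ε / (2 * ρm w ^ 2)) := by ring
  · rw [h.core_zero (hr.trans hwx) hz]
    exact mul_nonneg (sq_nonneg z) (div_nonneg hε (by positivity))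

lemma Spec.mono_step {ε1 ε2 b1 l1 r1 l2 r2 : ℝ} {ψ1 ψ2 : ℝ → ℝ}
    (h1 : Spec ρ' ε1 b1 l1 r1 ψ1) (h2 : Spec ρ' ε2 l1 l2 r2 ψ2) (x : ℝ) :
    Phi ψ1 x ≤ Phi ψ2 x := by
  have key : ∀ X : ℝ, 0 ≤ X → Phi ψ1 X ≤ Phi ψ2 X := by
    intro X hX
    refine intervalIntegral.integral_mono_on hX
      ((continuous_Psi h1.cont).intervalIntegrable _ _)
      ((continuous_Psi h2.cont).intervalIntegrable _ _) ?_
    intro t ht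
    rcases le_total t r2 with h | h
    · have hl : t ≤ l1 := h.trans (h2.rb.trans (by linarith [h2.lpos, h1.lpos]))
      rw [h1.Psi_eq_zero ht.1 hl]
      exact Psi_nonneg h2.nonneg ht.1
    · rw [h2.Psi_eq_one h]
      exact h1.Psi_le_one t
  rw [Phi_abs (ψ := ψ1), Phi_abs (ψ := ψ2)]
  exact key _ (abs_nonneg x)

lemma bump_exists (ρ' : ℝ → ℝ) (hmono : Monotone ρ') (hpos : ∀ x : ℝ, 0 < x → 0 < ρ' x)
    (hdiv : ∀ x : ℝ, 0 < x → ∫⁻ z in Set.Ioc (0:ℝ) x, (ENNReal.ofReal (ρ' z ^ 2))⁻¹ = ⊤)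
    (ε b : ℝ) (hε : 0 < ε) (hb : 0 < b) :
    ∃ p : ℝ × ℝ × (ℝ → ℝ), Spec ρ' ε b p.1 p.2.1 p.2.2 := by
  have hmeas : Measurable ρ' := hmono.measurable
  -- Step 1: choose the truncation level M
  obtain ⟨M, hM, hM2⟩ : ∃ M : ℝ, 1 ≤ M ∧ (2:ℝ≥0∞) ≤ ∫⁻ z in Set.Ioc (0:ℝ) (b/2),
      ENNReal.ofReal (min (ε / ρ' z ^ 2) M) := by
    have hmeasF : ∀ M : ℝ, Measurable fun z => ENNReal.ofReal (min (ε / ρ' z ^ 2) M) := by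
      intro M
      exact ((measurable_const.div (hmeas.pow_const 2)).min measurable_const).ennreal_ofReal
    have hsup : ∀ c : ℝ, (⨆ n : ℕ, ENNReal.ofReal (min c (n:ℝ))) = ENNReal.ofReal c := by
      intro c
      refine le_antisymm (iSup_le fun n => ENNReal.ofReal_le_ofReal (min_le_left _ _)) ?_
      exact le_iSup_of_le ⌈c⌉₊ (ENNReal.ofReal_le_ofReal (le_min le_rfl (Nat.le_ceil c)))
    have hMCT : (⨆ n : ℕ, ∫⁻ z in Set.Ioc (0:ℝ) (b/2),
        ENNReal.ofReal (min (ε / ρ' z ^ 2) (n:ℝ))) = ⊤ := by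
      rw [← lintegral_iSup (fun n => hmeasF _) ?mono]
      case mono =>
        intro i j hij z
        exact ENNReal.ofReal_le_ofReal (min_le_min le_rfl (by exact_mod_cast hij))
      have heq : ∫⁻ z in Set.Ioc (0:ℝ) (b/2),
          (⨆ n : ℕ, ENNReal.ofReal (min (ε / ρ' z ^ 2) (n:ℝ)))
          = ∫⁻ z in Set.Ioc (0:ℝ) (b/2),
            ENNReal.ofReal ε * (ENNReal.ofReal (ρ' z ^ 2))⁻¹ := by
        refine setLIntegral_congr_fun measurableSet_Ioc (fun z hz => ?_)
        rw [hsup]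
        have hρz : 0 < ρ' z ^ 2 := pow_pos (hpos z hz.1) 2
        rw [ENNReal.ofReal_div_of_pos hρz, div_eq_mul_inv]
      rw [heq, lintegral_const_mul' _ _ ENNReal.ofReal_ne_top, hdiv _ (by linarith)]
      exact ENNReal.mul_top (by simpa using hε)
    have h2 : (2:ℝ≥0∞) < ⨆ n : ℕ, ∫⁻ z in Set.Ioc (0:ℝ) (b/2),
        ENNReal.ofReal (min (ε / ρ' z ^ 2) (n:ℝ)) := by
      rw [hMCT]; exact Ne.lt_top (by simp)
    obtain ⟨n, hn⟩ := lt_iSup_iff.mp h2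
    refine ⟨max n 1, le_max_right _ _, ?_⟩
    refine hn.le.trans (lintegral_mono fun z => ENNReal.ofReal_le_ofReal ?_)
    exact min_le_min le_rfl (le_max_left _ _)
  -- Step 2: the truncated cut-off density f and its mass
  set F : ℝ → ℝ := fun z => min (ε / ρ' z ^ 2) M with hF
  have hFmeas : Measurable F :=
    (measurable_const.div (hmeas.pow_const 2)).min measurable_const
  have hFnonneg : ∀ z, 0 ≤ F z := fun z =>
    le_min (div_nonneg hε.le (sq_nonneg _)) (by linarith)
  have hMpos : (0:ℝ) < M := by linarith
  set a : ℝ := min (1/M) (b/4) with ha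
  have hapos : 0 < a := lt_min (by positivity) (by linarith)
  have haM : M * a ≤ 1 := by
    calc M * a ≤ M * (1/M) := mul_le_mul_of_nonneg_left (min_le_left _ _) hMpos.le
    _ = 1 := by field_simp
  have hab : a ≤ b/4 := min_le_right _ _
  set f : ℝ → ℝ := (Set.Ioc a (b/2)).indicator F with hf
  have hfmeas : Measurable f := hFmeas.indicator measurableSet_Ioc
  have hfnonneg : ∀ s, 0 ≤ f s := fun s => Set.indicator_nonneg (fun t _ => hFnonneg t) s
  have hfleft : ∀ s, s ≤ a → f s = 0 := by
    intro s hs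
    exact Set.indicator_of_notMem (fun hmem => absurd hmem.1 (not_lt.mpr hs)) _
  have hfright : ∀ s, b/2 < s → f s = 0 := by
    intro s hs
    exact Set.indicator_of_notMem (fun hmem => absurd hmem.2 (not_le.mpr hs)) _
  have hfbound : ∀ s, 0 < s → f s ≤ ε / ρ' s ^ 2 := by
    intro s hs
    by_cases hmem : s ∈ Set.Ioc a (b/2)
    · rw [hf, Set.indicator_of_mem hmem]; exact min_le_left _ _
    · rw [hf, Set.indicator_of_notMem hmem]
      exact div_nonneg hε.le (sq_nonneg _)
  have hfint : Integrable f := by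
    refine Integrable.mono' (g := (Set.Ioc a (b/2)).indicator fun _ => M) ?_
      hfmeas.aestronglyMeasurable (ae_of_all _ fun s => ?_)
    · rw [integrable_indicator_iff measurableSet_Ioc]
      exact integrableOn_const measure_Ioc_lt_top.ne
    · rw [Real.norm_eq_abs, abs_of_nonneg (hfnonneg s)]
      by_cases hs : s ∈ Set.Ioc a (b/2)
      · rw [hf, Set.indicator_of_mem hs, Set.indicator_of_mem hs]
        exact min_le_right _ _
      · rw [hf, Set.indicator_of_notMem hs, Set.indicator_of_notMem hs]
  have hsplit : (∫⁻ z in Set.Ioc (0:ℝ) (b/2), ENNReal.ofReal (F z))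
      = (∫⁻ z in Set.Ioc (0:ℝ) a, ENNReal.ofReal (F z))
        + ∫⁻ z in Set.Ioc a (b/2), ENNReal.ofReal (F z) := by
    rw [← lintegral_union measurableSet_Ioc (Set.Ioc_disjoint_Ioc_of_le le_rfl),
      Set.Ioc_union_Ioc_eq_Ioc hapos.le (by linarith)]
  have hsmall : (∫⁻ z in Set.Ioc (0:ℝ) a, ENNReal.ofReal (F z)) ≤ 1 := by
    calc (∫⁻ z in Set.Ioc (0:ℝ) a, ENNReal.ofReal (F z))
        ≤ ∫⁻ _ in Set.Ioc (0:ℝ) a, ENNReal.ofReal M :=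
          lintegral_mono fun z => ENNReal.ofReal_le_ofReal (min_le_right _ _)
      _ = ENNReal.ofReal M * volume (Set.Ioc (0:ℝ) a) := by
          rw [lintegral_const, Measure.restrict_apply_univ]
      _ = ENNReal.ofReal M * ENNReal.ofReal a := by rw [Real.volume_Ioc, sub_zero]
      _ = ENNReal.ofReal (M * a) := (ENNReal.ofReal_mul hMpos.le).symm
      _ ≤ ENNReal.ofReal 1 := ENNReal.ofReal_le_ofReal haM
      _ = 1 := ENNReal.ofReal_one
  have hbig : (1:ℝ≥0∞) ≤ ∫⁻ z in Set.Ioc a (b/2), ENNReal.ofReal (F z) := by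
    by_contra hcon
    push_neg at hcon
    have hlt : (∫⁻ z in Set.Ioc (0:ℝ) (b/2), ENNReal.ofReal (F z)) < 2 := by
      rw [hsplit]
      calc _ ≤ 1 + ∫⁻ z in Set.Ioc a (b/2), ENNReal.ofReal (F z) := add_le_add_left hsmall _
        _ < 1 + 1 := ENNReal.add_lt_add_left one_ne_top hcon
        _ = 2 := one_add_one_eq_two
    exact absurd hM2 (not_le.mpr hlt)
  have hTlin : (1:ℝ≥0∞) ≤ ∫⁻ z in Set.Ioc (0:ℝ) (b/2), ENNReal.ofReal (f z) := by
    refine hbig.trans ?_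
    refine le_trans (le_of_eq ?_) (lintegral_mono_set (Set.Ioc_subset_Ioc_left hapos.le))
    refine (setLIntegral_congr_fun measurableSet_Ioc (fun z hz => ?_)).symm
    rw [hf, Set.indicator_of_mem hz]
  have hT : (1:ℝ) ≤ ∫ z in Set.Ioc (0:ℝ) (b/2), f z := by
    rw [← ENNReal.one_le_ofReal]
    rw [ofReal_integral_eq_lintegral_ofReal hfint.integrableOn
      (ae_of_all _ fun s => hfnonneg s)]
    exact hTlin
  clear hsplit hsmall hbig hTlin hM2 hFmeas hfmeas
  -- Step 3: smooth by averaging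
  have hint : ∀ u v : ℝ, IntervalIntegrable f volume u v := fun u v => hfint.intervalIntegrable
  set H : ℝ → ℝ := fun y => ∫ t in (0:ℝ)..y, f t with hH
  have hHcont : Continuous H := intervalIntegral.continuous_primitive hint 0
  have hHadj : ∀ u v : ℝ, H v - H u = ∫ t in u..v, f t := by
    intro u v
    rw [hH]
    simp only
    rw [← integral_add_adjacent_intervals (hint 0 u) (hint u v)]
    ring
  set T : ℝ := H (b/2) with hTdef
  have hTval : T = ∫ z in Set.Ioc (0:ℝ) (b/2), f z := by
    rw [hTdef, hH]
    simp only
    rw [intervalIntegral.integral_of_le (by linarith)]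
  have hT1 : (1:ℝ) ≤ T := hTval ▸ hT
  have hHzero : ∀ x, x ≤ a → H x = 0 := by
    intro x hx
    rw [hH]
    simp only
    have heq : EqOn f (fun _ => (0:ℝ)) (uIcc 0 x) := fun t ht =>
      hfleft t (le_trans ht.2 (sup_le hapos.le hx))
    rw [intervalIntegral.integral_congr heq, intervalIntegral.integral_const, smul_zero]
  have hHconst : ∀ x, b/2 ≤ x → H x = T := by
    intro x hx
    have h1 : H x - H (b/2) = ∫ t in (b/2)..x, f t := hHadj _ _
    have h2 : (∫ t in (b/2)..x, f t) = 0 := by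
      rw [intervalIntegral.integral_of_le hx]
      rw [show (0:ℝ) = ∫ t in Set.Ioc (b/2) x, (0:ℝ) from (integral_zero _ _).symm]
      exact setIntegral_congr_fun measurableSet_Ioc fun t ht => hfright t ht.1
    linarith [h1, h2]
  set δ : ℝ := a/2 with hδ
  have hδpos : 0 < δ := by positivity
  set g0 : ℝ → ℝ := fun x => (H (x + δ) - H x) / δ with hg0
  have hg0cont : Continuous g0 :=
    ((hHcont.comp (continuous_id.add continuous_const)).sub hHcont).div_const _
  have hg0int : ∀ x, g0 x = (∫ t in x..(x + δ), f t) / δ := fun x => by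
    rw [hg0]; simp only [hHadj]
  have hg0nonneg : ∀ x, 0 ≤ g0 x := by
    intro x
    rw [hg0int]
    exact div_nonneg
      (intervalIntegral.integral_nonneg (by linarith) fun t _ => hfnonneg t) hδpos.le
  have hg0left : ∀ x, x ≤ δ → g0 x = 0 := by
    intro x hx
    rw [hg0int]
    have h0 : (∫ t in x..(x + δ), f t) = 0 := by
      rw [show (0:ℝ) = ∫ t in x..(x+δ), (0:ℝ) by simp]
      refine intervalIntegral.integral_congr fun t ht => ?_
      rw [uIcc_of_le (by linarith)] at ht
      exact hfleft t (by have := ht.2; rw [hδ] at *; linarith)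
    rw [h0, zero_div]
  have hg0right : ∀ x, b/2 ≤ x → g0 x = 0 := by
    intro x hx
    rw [hg0int]
    have h0 : (∫ t in x..(x + δ), f t) = 0 := by
      rw [intervalIntegral.integral_of_le (by linarith)]
      rw [show (0:ℝ) = ∫ t in Set.Ioc x (x+δ), (0:ℝ) from (integral_zero _ _).symm]
      exact setIntegral_congr_fun measurableSet_Ioc fun t ht =>
        hfright t (lt_of_le_of_lt hx ht.1)
    rw [h0, zero_div]
  have hg0bound : ∀ x, 0 < x → g0 x ≤ ε / ρ' x ^ 2 := by
    intro x hx
    rw [hg0int]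
    rw [div_le_iff₀ hδpos]
    have h0 : (∫ t in x..(x + δ), f t) ≤ ∫ t in x..(x + δ), (ε / ρ' x ^ 2) := by
      refine intervalIntegral.integral_mono_on (by linarith) (hint _ _)
        intervalIntegrable_const fun t ht => ?_
      refine (hfbound t (lt_of_lt_of_le hx ht.1)).trans ?_
      exact div_le_div_of_nonneg_left hε.le (pow_pos (hpos x hx) 2)
        (pow_le_pow_left₀ (hpos x hx).le (hmono ht.1) 2)
    refine h0.trans (le_of_eq ?_)
    rw [intervalIntegral.integral_const, smul_eq_mul]
    ring
  have hc0 : (∫ t in (0:ℝ)..(b/2), g0 t) = T := by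
    have hHint : ∀ u v : ℝ, IntervalIntegrable H volume u v :=
      fun u v => hHcont.intervalIntegrable u v
    have e1 : (∫ t in (0:ℝ)..(b/2), g0 t)
        = ((∫ t in (0:ℝ)..(b/2), H (t + δ)) - ∫ t in (0:ℝ)..(b/2), H t) / δ := by
      have hshift : Continuous fun t : ℝ => H (t + δ) := hHcont.comp (continuous_add_right δ)
      rw [hg0]
      simp only
      rw [intervalIntegral.integral_div]
      congr 1
      exact intervalIntegral.integral_sub (hshift.intervalIntegrable _ _) (hHint _ _)
    have e2 : (∫ t in (0:ℝ)..(b/2), H (t + δ)) = ∫ t in δ..(b/2 + δ), H t := by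
      simpa using intervalIntegral.integral_comp_add_right (a := (0:ℝ)) (b := b/2) H δ
    have e3 : (∫ t in δ..(b/2 + δ), H t)
        = (∫ t in δ..(b/2), H t) + ∫ t in (b/2)..(b/2 + δ), H t :=
      (integral_add_adjacent_intervals (hHint _ _) (hHint _ _)).symm
    have e4 : (∫ t in (0:ℝ)..(b/2), H t) = (∫ t in (0:ℝ)..δ, H t) + ∫ t in δ..(b/2), H t :=
      (integral_add_adjacent_intervals (hHint _ _) (hHint _ _)).symm
    have e5 : (∫ t in (0:ℝ)..δ, H t) = 0 := by
      have heq : EqOn H (fun _ => (0:ℝ)) (uIcc 0 δ) := by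
        intro t ht
        rw [uIcc_of_le hδpos.le] at ht
        exact hHzero t (by rw [hδ] at *; linarith [ht.2])
      rw [intervalIntegral.integral_congr heq, intervalIntegral.integral_const, smul_zero]
    have e6 : (∫ t in (b/2)..(b/2 + δ), H t) = δ * T := by
      have heq : EqOn H (fun _ => T) (uIcc (b/2) (b/2 + δ)) := by
        intro t ht
        rw [uIcc_of_le (by linarith)] at ht
        exact hHconst t ht.1
      rw [intervalIntegral.integral_congr heq, intervalIntegral.integral_const, smul_eq_mul]
      ring
    rw [e1, e2, e3, e4, e5, e6]
    field_simp
    ring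
  have hc01 : (1:ℝ) ≤ ∫ t in (0:ℝ)..(b/2), g0 t := by rw [hc0]; exact hT1
  have hc0pos : (0:ℝ) < ∫ t in (0:ℝ)..(b/2), g0 t := by linarith
  refine ⟨(δ, b/2, fun t => g0 t / (∫ t in (0:ℝ)..(b/2), g0 t)),
    ?_, ?_, le_rfl, ?_, ?_, ?_, ?_, ?_, ?_⟩
  · exact hδpos
  · rw [hδ]; linarith
  · exact hg0cont.div_const _
  · exact fun t => div_nonneg (hg0nonneg t) hc0pos.le
  · intro t ht
    show g0 t / (∫ t in (0:ℝ)..(b/2), g0 t) = 0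
    rw [hg0left t ht, zero_div]
  · intro t ht
    show g0 t / (∫ t in (0:ℝ)..(b/2), g0 t) = 0
    rw [hg0right t ht, zero_div]
  · intro t ht
    exact le_trans (div_le_self (hg0nonneg t) hc01) (hg0bound t ht)
  · show (∫ t in (0:ℝ)..(b/2), g0 t / (∫ s in (0:ℝ)..(b/2), g0 s)) = 1
    rw [intervalIntegral.integral_div]
    exact div_self hc0pos.ne'

end YWaux

/-- Property 4(b) of the Yamada–Watanabe-type approximating sequence in the pathwise
uniqueness proof, under Assumption 4.1 (`ρ_m ≤ ρ` on `[0, x_m]`): there is a sequence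
`(φ_k)_{k ≥ 1}` of nonnegative `C²` functions, pointwise nondecreasing in `k` and
converging to `|·|`, with `0 ≤ φ_k' ≤ 1` on `[0,∞)`, `−1 ≤ φ_k' ≤ 0` on `(−∞,0]`,
`φ_k'' ≥ 0`, and such that
`sup_{0 ≤ x, y ≤ m} ∫_U D_{g_m(x,u) − g_m(y,u)} φ_k (x − y) μ(du) → 0` as `k → ∞`,
where `g_m = min(g, m)` and `D_z f(w) = f(w + z) − f(w) − z f'(w)` (a nonnegative
quantity by convexity, so the integral is a Lebesgue integral in `[0,∞]`). -/
theorem exists_yamada_watanabe_jump_approx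
    {U : Type*} [MeasurableSpace U] (μ : MeasureTheory.Measure U)
    [MeasureTheory.SigmaFinite μ]
    (m : ℕ) (hm : 1 ≤ m) (x_m : ℝ) (hx_m : 0 < x_m)
    (ρ ρm : ℝ → ℝ)
    (hρ_nonneg : ∀ x : ℝ, 0 ≤ x → 0 ≤ ρ x)
    (hρm_nonneg : ∀ x : ℝ, 0 ≤ x → 0 ≤ ρm x)
    (hρ_mono : MonotoneOn ρ (Set.Ici (0 : ℝ)))
    (hρm_mono : MonotoneOn ρm (Set.Ici (0 : ℝ)))
    (hρ_pos : ∀ x : ℝ, 0 < x → 0 < ρ x)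
    (hρm_pos : ∀ x : ℝ, 0 < x → 0 < ρm x)
    (hρ_div : ∀ x : ℝ, 0 < x →
      ∫⁻ z in Set.Ioc (0 : ℝ) x, (ENNReal.ofReal ((ρ z) ^ 2))⁻¹ = ⊤)
    (hρm_div : ∀ x : ℝ, 0 < x →
      ∫⁻ z in Set.Ioc (0 : ℝ) x, (ENNReal.ofReal ((ρm z) ^ 2))⁻¹ = ⊤)
    (hρmρ : ∀ x ∈ Set.Icc (0 : ℝ) x_m, ρm x ≤ ρ x)
    (g : ℝ → U → ℝ)
    (hg_meas : Measurable (Function.uncurry g))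
    (hg_mono : ∀ u : U, Monotone (fun x => g x u))
    (hg_bound : ∀ x y : ℝ, 0 ≤ x → x ≤ (m : ℝ) → 0 ≤ y → y ≤ (m : ℝ) →
      ∫⁻ u, ENNReal.ofReal ((min (g x u) (m : ℝ) - min (g y u) (m : ℝ)) ^ 2) ∂μ ≤
        ENNReal.ofReal ((ρm |x - y|) ^ 2)) :
    ∃ φ : ℕ → ℝ → ℝ,
      (∀ k : ℕ, 1 ≤ k → ContDiff ℝ 2 (φ k)) ∧
      (∀ k : ℕ, 1 ≤ k → ∀ x : ℝ, 0 ≤ φ k x) ∧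
      (∀ k : ℕ, 1 ≤ k → ∀ x : ℝ, φ k x ≤ φ (k + 1) x) ∧
      (∀ x : ℝ, Filter.Tendsto (fun k => φ k x) Filter.atTop (nhds |x|)) ∧
      (∀ k : ℕ, 1 ≤ k → ∀ x : ℝ, 0 ≤ x →
        0 ≤ deriv (φ k) x ∧ deriv (φ k) x ≤ 1) ∧
      (∀ k : ℕ, 1 ≤ k → ∀ x : ℝ, x ≤ 0 →
        -1 ≤ deriv (φ k) x ∧ deriv (φ k) x ≤ 0) ∧
      (∀ k : ℕ, 1 ≤ k → ∀ x : ℝ, 0 ≤ deriv (deriv (φ k)) x) ∧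
      (∀ ε : ℝ, 0 < ε → ∃ K : ℕ, ∀ k : ℕ, K ≤ k →
        ∀ x y : ℝ, 0 ≤ x → x ≤ (m : ℝ) → 0 ≤ y → y ≤ (m : ℝ) →
        ∫⁻ u, ENNReal.ofReal
            (φ k ((x - y) + (min (g x u) (m : ℝ) - min (g y u) (m : ℝ)))
              - φ k (x - y)
              - (min (g x u) (m : ℝ) - min (g y u) (m : ℝ)) * deriv (φ k) (x - y)) ∂μ
          ≤ ENNReal.ofReal ε) := by
  classical
  set ρ' : ℝ → ℝ := fun t => ρ (max t 0) with hρ'def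
  have hρ'eq : ∀ t : ℝ, 0 ≤ t → ρ' t = ρ t := fun t ht => by
    rw [hρ'def]; simp only; rw [max_eq_left ht]
  have hmono' : Monotone ρ' := fun s t hst =>
    hρ_mono (le_max_right s 0) (le_max_right t 0) (max_le_max hst le_rfl)
  have hpos' : ∀ t : ℝ, 0 < t → 0 < ρ' t := fun t ht => by
    rw [hρ'eq t ht.le]; exact hρ_pos t ht
  have hdiv' : ∀ x : ℝ, 0 < x →
      ∫⁻ z in Set.Ioc (0:ℝ) x, (ENNReal.ofReal (ρ' z ^ 2))⁻¹ = ⊤ := by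
    intro x hx
    have hcg : (∫⁻ z in Set.Ioc (0:ℝ) x, (ENNReal.ofReal (ρ' z ^ 2))⁻¹)
        = ∫⁻ z in Set.Ioc (0:ℝ) x, (ENNReal.ofReal (ρ z ^ 2))⁻¹ :=
      setLIntegral_congr_fun measurableSet_Ioc
        (fun z hz => by rw [hρ'eq z hz.1.le])
    rw [hcg]; exact hρ_div x hx
  choose Fb hFb using YWaux.bump_exists ρ' hmono' hpos' hdiv'
  obtain ⟨T, hT0, hTspec⟩ :
      ∃ T : ℕ → {p : ℝ × ℝ × (ℝ → ℝ) // 0 < p.1 ∧ p.1 ≤ p.2.1 ∧ p.2.1 ≤ x_m},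
        (T 0).1.1 = x_m ∧ ∀ k : ℕ, YWaux.Spec ρ' (1/(k+1:ℝ)) (T k).1.1 (T (k+1)).1.1
          (T (k+1)).1.2.1 (T (k+1)).1.2.2 := by
    refine ⟨fun n => Nat.rec ⟨(x_m, x_m, fun _ => 0), hx_m, le_rfl, le_rfl⟩
      (fun k ih => ⟨Fb (1/(k+1:ℝ)) ih.1.1 (by positivity) ih.2.1,
        (hFb (1/(k+1:ℝ)) ih.1.1 (by positivity) ih.2.1).lpos,
        (hFb (1/(k+1:ℝ)) ih.1.1 (by positivity) ih.2.1).lr,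
        le_trans (hFb (1/(k+1:ℝ)) ih.1.1 (by positivity) ih.2.1).rb
          (by obtain ⟨h1, h2, h3⟩ := ih.2; linarith)⟩) n, rfl, fun k => hFb _ _ _ _⟩
  have hdecay : ∀ k : ℕ, (T (k+1)).1.2.1 ≤ x_m / 2 ^ (k+1) := by
    intro k
    induction k with
    | zero =>
      have h := (hTspec 0).rb
      rw [hT0] at h
      simpa using h
    | succ n ihn =>
      have h1 := (hTspec (n+1)).rb
      have h2 := (T (n+1)).2.2.1
      have h3 : x_m / 2 ^ (n+1) / 2 = x_m / 2 ^ (n+1+1) := by ring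
      linarith
  refine ⟨fun k => YWaux.Phi ((T k).1.2.2), ?_, ?_, ?_, ?_, ?_, ?_, ?_, ?_⟩
  · intro k hk
    obtain ⟨j, rfl⟩ : ∃ j, k = j + 1 := ⟨k - 1, by omega⟩
    exact YWaux.contDiff_Phi (hTspec j).cont
  · intro k hk x
    obtain ⟨j, rfl⟩ : ∃ j, k = j + 1 := ⟨k - 1, by omega⟩
    exact YWaux.Phi_nonneg (hTspec j).cont (hTspec j).nonneg x
  · intro k hk x
    obtain ⟨j, rfl⟩ : ∃ j, k = j + 1 := ⟨k - 1, by omega⟩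
    exact YWaux.Spec.mono_step (hTspec j) (hTspec (j+1)) x
  · intro x
    have hub : ∀ᶠ k in Filter.atTop, YWaux.Phi ((T k).1.2.2) x ≤ |x| := by
      filter_upwards [Filter.eventually_ge_atTop 1] with k hk
      obtain ⟨j, rfl⟩ : ∃ j, k = j + 1 := ⟨k - 1, by omega⟩
      exact (hTspec j).phi_le_abs x
    have hlb : ∀ᶠ k in Filter.atTop, |x| - x_m / 2 ^ k ≤ YWaux.Phi ((T k).1.2.2) x := by
      filter_upwards [Filter.eventually_ge_atTop 1] with k hk
      obtain ⟨j, rfl⟩ : ∃ j, k = j + 1 := ⟨k - 1, by omega⟩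
      have h1 := (hTspec j).abs_sub_le x
      have h2 := hdecay j
      linarith
    have hl : Filter.Tendsto (fun k : ℕ => |x| - x_m / 2 ^ k) Filter.atTop (𝓝 (|x| - 0)) := by
      refine Filter.Tendsto.const_sub _ ?_
      have h1 : Filter.Tendsto (fun k : ℕ => ((1:ℝ)/2) ^ k) Filter.atTop (𝓝 0) :=
        tendsto_pow_atTop_nhds_zero_of_lt_one (by norm_num) (by norm_num)
      have h2 := h1.const_mul x_m
      rw [mul_zero] at h2
      refine h2.congr fun k => ?_
      rw [div_pow, one_pow]
      ring
    rw [sub_zero] at hl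
    exact tendsto_of_tendsto_of_tendsto_of_le_of_le' hl tendsto_const_nhds hlb hub
  · intro k hk x hx
    obtain ⟨j, rfl⟩ : ∃ j, k = j + 1 := ⟨k - 1, by omega⟩
    rw [YWaux.deriv_Phi (hTspec j).cont]
    exact ⟨YWaux.Psi_nonneg (hTspec j).nonneg hx, (hTspec j).Psi_le_one x⟩
  · intro k hk x hx
    obtain ⟨j, rfl⟩ : ∃ j, k = j + 1 := ⟨k - 1, by omega⟩
    rw [YWaux.deriv_Phi (hTspec j).cont]
    have h := YWaux.Psi_neg (ψ := (T (j+1)).1.2.2) (-x)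
    rw [neg_neg] at h
    constructor
    · rw [h]
      have := (hTspec j).Psi_le_one (-x)
      linarith
    · rw [h]
      have := YWaux.Psi_nonneg (hTspec j).nonneg (neg_nonneg.mpr hx)
      linarith
  · intro k hk x
    obtain ⟨j, rfl⟩ : ∃ j, k = j + 1 := ⟨k - 1, by omega⟩
    rw [YWaux.deriv_Phi (hTspec j).cont, YWaux.deriv_Psi (hTspec j).cont]
    exact (hTspec j).nonneg _
  · intro ε hε
    obtain ⟨K, hK⟩ := exists_nat_gt (1/ε)
    refine ⟨K + 1, fun k hk x y hx hxm hy hym => ?_⟩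
    obtain ⟨j, rfl⟩ : ∃ j, k = j + 1 := ⟨k - 1, by omega⟩
    have hsp := hTspec j
    have hc := hsp.cont
    have hεk : (0:ℝ) < 1/(j+1:ℝ) := by positivity
    have hεkε : 1/(j+1:ℝ) ≤ ε := by
      have h1 : (K:ℝ) + 1 ≤ (j:ℝ) + 1 := by
        have : (K:ℝ) ≤ (j:ℝ) := by exact_mod_cast (by omega : K ≤ j)
        linarith
      have h2 : 1/ε < (j:ℝ) + 1 := lt_of_lt_of_le hK (by linarith [Nat.cast_nonneg (α := ℝ) K])
      rw [div_le_iff₀ (by positivity)]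
      rw [div_lt_iff₀ hε] at h2
      nlinarith
    rw [YWaux.deriv_Phi hc]
    rcases eq_or_ne x y with rfl | hne
    · simp
    · have hW : 0 < |x - y| := abs_pos.mpr (sub_ne_zero.mpr hne)
      have hρmW : 0 < ρm |x - y| := hρm_pos _ hW
      set c : ℝ := (1/(j+1:ℝ)) / (2 * ρm |x - y| ^ 2) with hcdef
      have hcomp : ∀ t, 0 < t → t ≤ x_m → ρm t ≤ ρ' t := fun t ht1 ht2 => by
        rw [hρ'eq t ht1.le]; exact hρmρ t ⟨ht1.le, ht2⟩
      have hpt : ∀ u : U,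
          YWaux.Phi ((T (j+1)).1.2.2)
              ((x - y) + (min (g x u) (m:ℝ) - min (g y u) (m:ℝ)))
            - YWaux.Phi ((T (j+1)).1.2.2) (x - y)
            - (min (g x u) (m:ℝ) - min (g y u) (m:ℝ)) * YWaux.Psi ((T (j+1)).1.2.2) (x - y)
          ≤ (min (g x u) (m:ℝ) - min (g y u) (m:ℝ)) ^ 2 * c := by
        intro u
        set zz : ℝ := min (g x u) (m:ℝ) - min (g y u) (m:ℝ) with hzz
        rcases (sub_ne_zero.mpr hne).lt_or_gt with hneg | hposs
        · have hz : zz ≤ 0 := by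
            rw [hzz]
            exact sub_nonpos.mpr (min_le_min (hg_mono u (by linarith : x ≤ y)) le_rfl)
          have hceq : c = 1/(j+1:ℝ) / (2 * ρm (-(x - y)) ^ 2) := by
            rw [hcdef, abs_of_neg hneg]
          have hb2 := hsp.Dbound hεk.le hmono' hpos' ρm x_m (T (j+1)).2.2.2 hρm_pos
            hcomp (by linarith : (0:ℝ) < -(x - y)) (by linarith : (0:ℝ) ≤ -zz)
          rw [YWaux.D_neg, hceq]
          exact le_trans hb2 (le_of_eq (by ring))
        · have hz : 0 ≤ zz := by
            rw [hzz]
            exact sub_nonneg.mpr (min_le_min (hg_mono u (by linarith : y ≤ x)) le_rfl)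
          have hceq : c = 1/(j+1:ℝ) / (2 * ρm (x - y) ^ 2) := by
            rw [hcdef, abs_of_pos hposs]
          rw [hceq]
          exact hsp.Dbound hεk.le hmono' hpos' ρm x_m (T (j+1)).2.2.2 hρm_pos
            hcomp hposs hz
      have step1 : (∫⁻ u, ENNReal.ofReal
          (YWaux.Phi ((T (j+1)).1.2.2)
              ((x - y) + (min (g x u) (m:ℝ) - min (g y u) (m:ℝ)))
            - YWaux.Phi ((T (j+1)).1.2.2) (x - y)
            - (min (g x u) (m:ℝ) - min (g y u) (m:ℝ))
              * YWaux.Psi ((T (j+1)).1.2.2) (x - y)) ∂μ)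
          ≤ ∫⁻ u, ENNReal.ofReal ((min (g x u) (m:ℝ) - min (g y u) (m:ℝ)) ^ 2)
              * ENNReal.ofReal c ∂μ := by
        refine lintegral_mono fun u => ?_
        rw [← ENNReal.ofReal_mul (sq_nonneg _)]
        exact ENNReal.ofReal_le_ofReal (hpt u)
      refine le_trans step1 ?_
      rw [lintegral_mul_const' _ _ ENNReal.ofReal_ne_top]
      refine le_trans (mul_le_mul_left (hg_bound x y hx hxm hy hym) _) ?_
      rw [← ENNReal.ofReal_mul (sq_nonneg _)]
      refine ENNReal.ofReal_le_ofReal ?_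
      have hkey : (ρm |x - y|) ^ 2 * c = (1/(j+1:ℝ))/2 := by
        rw [hcdef]
        field_simp
      rw [hkey]
      linarith
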